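/- arXiv:2501.11947 — 2 statements merged into one kernel-verified Lean document; each statement's English description precedes it below -/
import Mathlib

section
/- Let E : (0,∞) → ℝ be a continuous, strictly increasing, coercive scale function. Then the map sending a symmetric positive-definite 3×3 matrix C with spectral decomposition C = Σₐ λₐ² Mₐ to the generalized strain Σₐ E(λₐ) Mₐ is a bijection from the set of symmetric positive-definite matrices onto the set of symmetric matrices. -/
open Matrix Filter
open Polynomial

/-- `W` is the generalized strain (with scale function `E`) of the symmetric
positive-definite matrix `C = Σₐ λₐ² Mₐ`, i.e. `W = Σₐ E(λₐ) Mₐ` for a common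
spectral decomposition with orthonormal eigenvectors. -/
def IsGenStrainOf (E : ℝ → ℝ) (C W : Matrix (Fin 3) (Fin 3) ℝ) : Prop :=
  ∃ (l : Fin 3 → ℝ) (N : Fin 3 → (Fin 3 → ℝ)),
    (∀ a, 0 < l a) ∧
    (∀ a b, dotProduct (N a) (N b) = if a = b then 1 else 0) ∧
    C = ∑ a, (l a) ^ 2 • Matrix.vecMulVec (N a) (N a) ∧
    W = ∑ a, E (l a) • Matrix.vecMulVec (N a) (N a)

abbrev M3 := Matrix (Fin 3) (Fin 3) ℝ

def ON (N : Fin 3 → Fin 3 → ℝ) : Prop :=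
  ∀ a b, dotProduct (N a) (N b) = if a = b then 1 else 0

lemma sum_proj {N : Fin 3 → Fin 3 → ℝ} (hN : ON N) :
    ∑ a, vecMulVec (N a) (N a) = (1 : M3) := by
  have h1 : (Matrix.of N) * (Matrix.of N)ᵀ = (1 : M3) := by
    ext a b
    simpa [Matrix.mul_apply, dotProduct, Matrix.one_apply] using hN a b
  have h2 : (Matrix.of N)ᵀ * (Matrix.of N) = (1 : M3) := mul_eq_one_comm.mp h1
  have h3 : ∑ a, vecMulVec (N a) (N a) = (Matrix.of N)ᵀ * (Matrix.of N) := by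
    ext i j
    simp [Matrix.mul_apply, Matrix.sum_apply, vecMulVec_apply, mul_comm]
  rw [h3, h2]

lemma vmv_mul (u v w x : Fin 3 → ℝ) :
    vecMulVec u v * vecMulVec w x = dotProduct v w • vecMulVec u x := by
  ext i j
  simp only [Matrix.mul_apply, vecMulVec_apply, Matrix.smul_apply, dotProduct,
    smul_eq_mul, Finset.sum_mul]
  exact Finset.sum_congr rfl fun k _ => by ring

lemma pow_decomp {N : Fin 3 → Fin 3 → ℝ} (hN : ON N) (c : Fin 3 → ℝ) (n : ℕ) :
    (∑ a, c a • vecMulVec (N a) (N a)) ^ n = ∑ a, (c a) ^ n • vecMulVec (N a) (N a) := by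
  induction n with
  | zero => simpa using (sum_proj hN).symm
  | succ n ih =>
    rw [pow_succ, ih, Finset.sum_mul_sum]
    have key : ∀ a b : Fin 3,
        (c a ^ n • vecMulVec (N a) (N a)) * (c b • vecMulVec (N b) (N b)) =
        if a = b then (c a ^ (n + 1)) • vecMulVec (N a) (N b) else 0 := by
      intro a b
      rw [Algebra.smul_mul_assoc, Algebra.mul_smul_comm, vmv_mul, hN, smul_smul, smul_smul]
      by_cases h : a = b
      · subst h; simp [pow_succ, mul_comm]
      · simp [h]
    simp only [key, Finset.sum_ite_eq, Finset.mem_univ, if_true]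

lemma aeval_decomp {N : Fin 3 → Fin 3 → ℝ} (hN : ON N) (c : Fin 3 → ℝ) (p : ℝ[X]) :
    aeval (∑ a, c a • vecMulVec (N a) (N a)) p
      = ∑ a, p.eval (c a) • vecMulVec (N a) (N a) := by
  induction p using Polynomial.induction_on' with
  | add p q hp hq => simp [hp, hq, add_smul, Finset.sum_add_distrib]
  | monomial n r =>
    rw [aeval_monomial, ← Algebra.smul_def, pow_decomp hN, Finset.smul_sum]
    simp [eval_monomial, smul_smul]

lemma welldef (f : ℝ → ℝ) {c c' : Fin 3 → ℝ} {N N' : Fin 3 → Fin 3 → ℝ}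
    (hN : ON N) (hN' : ON N')
    (h : ∑ a, c a • vecMulVec (N a) (N a) = ∑ a, c' a • vecMulVec (N' a) (N' a)) :
    ∑ a, f (c a) • vecMulVec (N a) (N a) = ∑ a, f (c' a) • vecMulVec (N' a) (N' a) := by
  classical
  set S : Finset ℝ := Finset.univ.image c ∪ Finset.univ.image c' with hS
  set p : ℝ[X] := Lagrange.interpolate S id f with hp
  have hint : ∀ x ∈ S, p.eval x = f x := by
    intro x hx
    rw [hp]; exact Lagrange.eval_interpolate_at_node (v := id) f (Set.injOn_id _) hx
  have h1 := aeval_decomp hN c p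
  have h2 := aeval_decomp hN' c' p
  rw [h] at h1
  have h3 : ∑ a, p.eval (c a) • vecMulVec (N a) (N a)
      = ∑ a, p.eval (c' a) • vecMulVec (N' a) (N' a) := h1.symm.trans h2
  calc ∑ a, f (c a) • vecMulVec (N a) (N a)
      = ∑ a, p.eval (c a) • vecMulVec (N a) (N a) := by
        refine Finset.sum_congr rfl fun a _ => ?_
        rw [hint _ (Finset.mem_union_left _ (Finset.mem_image_of_mem c (Finset.mem_univ a)))]
    _ = ∑ a, p.eval (c' a) • vecMulVec (N' a) (N' a) := h3
    _ = ∑ a, f (c' a) • vecMulVec (N' a) (N' a) := by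
        refine Finset.sum_congr rfl fun a _ => ?_
        rw [hint _ (Finset.mem_union_right _ (Finset.mem_image_of_mem c' (Finset.mem_univ a)))]

lemma isSymm_decomp {N : Fin 3 → Fin 3 → ℝ} (c : Fin 3 → ℝ) :
    (∑ a, c a • vecMulVec (N a) (N a)).IsSymm := by
  show Matrix.transpose _ = _
  ext i j
  simp [Matrix.transpose_apply, Matrix.sum_apply, vecMulVec_apply, mul_comm]

lemma exists_decomp {A : M3} (hA : A.IsSymm) :
    ∃ (μ : Fin 3 → ℝ) (N : Fin 3 → Fin 3 → ℝ), ON N ∧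
      A = ∑ a, μ a • vecMulVec (N a) (N a) ∧ (A.PosDef → ∀ a, 0 < μ a) := by
  have hH : A.IsHermitian := by
    rw [Matrix.IsHermitian, Matrix.conjTranspose_eq_transpose_of_trivial]
    exact hA
  set U : M3 := (hH.eigenvectorUnitary : M3) with hU
  refine ⟨hH.eigenvalues, fun a i => U i a, ?_, ?_, fun h a => h.eigenvalues_pos a⟩
  · intro a b
    have h1 : star U * U = 1 := Unitary.coe_star_mul_self hH.eigenvectorUnitary
    have := congrFun (congrFun h1 a) b
    simpa [Matrix.mul_apply, Matrix.star_apply, Matrix.one_apply, dotProduct] using this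
  · have hst := hH.spectral_theorem
    ext i j
    conv_lhs => rw [hst]
    simp only [Unitary.conjStarAlgAut_apply, Matrix.mul_apply, Matrix.sum_apply, Matrix.smul_apply, vecMulVec_apply,
      Matrix.diagonal_apply, Matrix.star_apply, star_trivial, Function.comp_apply,
      smul_eq_mul]
    refine Finset.sum_congr rfl fun a _ => ?_
    rw [Finset.sum_eq_single a]
    · show (U i a * _) * U j a = _
      norm_num; ring
    · intro b _ hb; simp [hb]
    · simp

lemma mulVec_vmv (u x : Fin 3 → ℝ) :
    vecMulVec u u *ᵥ x = dotProduct u x • u := by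
  ext i
  simp only [Matrix.mulVec, dotProduct, vecMulVec_apply, Pi.smul_apply, smul_eq_mul,
    Finset.sum_mul]
  exact Finset.sum_congr rfl fun k _ => by ring

lemma dot_sum (x : Fin 3 → ℝ) (f : Fin 3 → Fin 3 → ℝ) :
    dotProduct x (∑ a, f a) = ∑ a, dotProduct x (f a) := by
  simp only [dotProduct, Finset.sum_apply, Finset.mul_sum]
  exact Finset.sum_comm

lemma sum_mulVec' (f : Fin 3 → M3) (x : Fin 3 → ℝ) :
    (∑ a, f a) *ᵥ x = ∑ a, f a *ᵥ x := by
  ext i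
  simp only [Matrix.mulVec, dotProduct, Matrix.sum_apply, Finset.sum_apply,
    Finset.sum_mul]
  rw [Finset.sum_comm]

lemma posdef_decomp {N : Fin 3 → Fin 3 → ℝ} (hN : ON N) {c : Fin 3 → ℝ}
    (hc : ∀ a, 0 < c a) : (∑ a, c a • vecMulVec (N a) (N a)).PosDef := by
  rw [Matrix.posDef_iff_dotProduct_mulVec]
  constructor
  · rw [Matrix.IsHermitian, Matrix.conjTranspose_eq_transpose_of_trivial]
    exact isSymm_decomp c
  · intro x hx
    have hdot : dotProduct (star x) ((∑ a, c a • vecMulVec (N a) (N a)) *ᵥ x)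
        = ∑ a, c a * (dotProduct (N a) x) ^ 2 := by
      rw [sum_mulVec']
      simp only [Matrix.smul_mulVec, mulVec_vmv]
      rw [dot_sum]
      refine Finset.sum_congr rfl fun a _ => ?_
      rw [dotProduct_smul, dotProduct_smul]
      simp only [smul_eq_mul, star_trivial]
      rw [sq, dotProduct_comm x (N a)]
    rw [hdot]
    have hne : ∃ a, dotProduct (N a) x ≠ 0 := by
      by_contra hall
      push_neg at hall
      apply hx
      have h1 : (1 : M3) *ᵥ x = x := Matrix.one_mulVec x
      rw [← sum_proj hN, sum_mulVec'] at h1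
      have h2 : ∑ a, vecMulVec (N a) (N a) *ᵥ x = 0 :=
        Finset.sum_eq_zero fun a _ => by rw [mulVec_vmv, hall a, zero_smul]
      rw [h2] at h1
      exact h1.symm
    obtain ⟨a0, ha0⟩ := hne
    refine Finset.sum_pos' (fun a _ => ?_) ⟨a0, Finset.mem_univ a0, ?_⟩
    · exact mul_nonneg (hc a).le (sq_nonneg _)
    · exact mul_pos (hc a0) (sq_pos_of_ne_zero ha0)

lemma E_surj (E : ℝ → ℝ) (hcont : ContinuousOn E (Set.Ioi 0))
    (hbot : Tendsto E (nhdsWithin 0 (Set.Ioi 0)) atBot)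
    (htop : Tendsto E atTop atTop) (y : ℝ) : ∃ x, 0 < x ∧ E x = y := by
  obtain ⟨a, hay, ha⟩ : ∃ a, E a < y ∧ a ∈ Set.Ioi (0:ℝ) := by
    have h1 : ∀ᶠ x in nhdsWithin 0 (Set.Ioi 0), E x < y :=
      hbot.eventually (eventually_lt_atBot y)
    have h2 : ∀ᶠ x in nhdsWithin 0 (Set.Ioi 0), x ∈ Set.Ioi (0:ℝ) :=
      eventually_mem_nhdsWithin
    exact (h1.and h2).exists
  obtain ⟨b, hb1, hb2⟩ : ∃ b, y < E b ∧ a ≤ b :=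
    ((htop.eventually (eventually_gt_atTop y)).and (eventually_ge_atTop a)).exists
  have ha0 : (0:ℝ) < a := ha
  have hsub : Set.Icc a b ⊆ Set.Ioi 0 := fun t ht => lt_of_lt_of_le ha0 ht.1
  obtain ⟨x, hx, hxy⟩ := intermediate_value_Icc hb2 (hcont.mono hsub) ⟨hay.le, hb1.le⟩
  exact ⟨x, lt_of_lt_of_le ha0 hx.1, hxy⟩

/-- For a continuous, strictly increasing, coercive scale function `E`, the generalized
strain map is a bijection from the symmetric positive-definite 3×3 matrices onto the
symmetric 3×3 matrices: every symmetric positive-definite `C` has a unique symmetric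
generalized strain `W`, and every symmetric `W` arises from a unique symmetric
positive-definite `C`. -/
theorem genStrain_bijective
    (E : ℝ → ℝ)
    (hcont : ContinuousOn E (Set.Ioi 0))
    (hmono : StrictMonoOn E (Set.Ioi 0))
    (hbot : Tendsto E (nhdsWithin 0 (Set.Ioi 0)) atBot)
    (htop : Tendsto E atTop atTop) :
    (∀ C : Matrix (Fin 3) (Fin 3) ℝ, C.IsSymm → C.PosDef →
      ∃! W : Matrix (Fin 3) (Fin 3) ℝ, W.IsSymm ∧ IsGenStrainOf E C W) ∧
    (∀ W : Matrix (Fin 3) (Fin 3) ℝ, W.IsSymm →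
      ∃! C : Matrix (Fin 3) (Fin 3) ℝ, (C.IsSymm ∧ C.PosDef) ∧ IsGenStrainOf E C W) := by
  classical
  have hinj : Set.InjOn E (Set.Ioi 0) := hmono.injOn
  set g : ℝ → ℝ := fun y => if h : ∃ x, 0 < x ∧ E x = y then (h.choose) ^ 2 else 0 with hg
  have hgE : ∀ x : ℝ, 0 < x → g (E x) = x ^ 2 := by
    intro x hx
    have h : ∃ z, 0 < z ∧ E z = E x := ⟨x, hx, rfl⟩
    have hch : h.choose = x :=
      hinj h.choose_spec.1 hx h.choose_spec.2
    simp only [hg, dif_pos h, hch]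
  constructor
  · intro C hCs hCpd
    obtain ⟨μ, N, hN, hdec, hpos⟩ := exists_decomp hCs
    have hμ := hpos hCpd
    set l : Fin 3 → ℝ := fun a => Real.sqrt (μ a) with hl
    have hlpos : ∀ a, 0 < l a := fun a => Real.sqrt_pos.mpr (hμ a)
    have hlsq : ∀ a, (l a) ^ 2 = μ a := fun a => Real.sq_sqrt (hμ a).le
    refine ⟨∑ a, E (l a) • vecMulVec (N a) (N a),
      ⟨isSymm_decomp _, l, N, hlpos, hN, ?_, rfl⟩, ?_⟩
    · rw [hdec]; exact Finset.sum_congr rfl fun a _ => by rw [hlsq]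
    · rintro W' ⟨hW's, l', N', hl', hN', hC', hW'⟩
      have hCC : ∑ a, ((l' a) ^ 2) • vecMulVec (N' a) (N' a)
          = ∑ a, ((l a) ^ 2) • vecMulVec (N a) (N a) := by
        rw [← hC', hdec]; exact Finset.sum_congr rfl fun a _ => by rw [hlsq]
      have key := welldef (fun t => E (Real.sqrt t)) hN' hN hCC
      calc W' = ∑ a, E (l' a) • vecMulVec (N' a) (N' a) := hW'
        _ = ∑ a, E (Real.sqrt ((l' a) ^ 2)) • vecMulVec (N' a) (N' a) :=
            Finset.sum_congr rfl fun a _ => by rw [Real.sqrt_sq (hl' a).le]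
        _ = ∑ a, E (Real.sqrt ((l a) ^ 2)) • vecMulVec (N a) (N a) := key
        _ = ∑ a, E (l a) • vecMulVec (N a) (N a) :=
            Finset.sum_congr rfl fun a _ => by rw [Real.sqrt_sq (hlpos a).le]
  · intro W hWs
    obtain ⟨μ, N, hN, hdec, -⟩ := exists_decomp hWs
    choose l hlpos hlE using fun a => E_surj E hcont hbot htop (μ a)
    refine ⟨∑ a, ((l a) ^ 2) • vecMulVec (N a) (N a),
      ⟨⟨isSymm_decomp _, posdef_decomp hN fun a => pow_pos (hlpos a) 2⟩,
        l, N, hlpos, hN, rfl, ?_⟩, ?_⟩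
    · rw [hdec]; exact Finset.sum_congr rfl fun a _ => by rw [hlE]
    · rintro C' ⟨⟨hC's, hC'pd⟩, l', N', hl', hN', hC', hW'⟩
      have hWW : ∑ a, E (l' a) • vecMulVec (N' a) (N' a)
          = ∑ a, E (l a) • vecMulVec (N a) (N a) := by
        rw [← hW', hdec]; exact Finset.sum_congr rfl fun a _ => by rw [hlE]
      have key := welldef g hN' hN hWW
      calc C' = ∑ a, ((l' a) ^ 2) • vecMulVec (N' a) (N' a) := hC'
        _ = ∑ a, g (E (l' a)) • vecMulVec (N' a) (N' a) :=
            Finset.sum_congr rfl fun a _ => by rw [hgE _ (hl' a)]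
        _ = ∑ a, g (E (l a)) • vecMulVec (N a) (N a) := key
        _ = ∑ a, ((l a) ^ 2) • vecMulVec (N a) (N a) :=
            Finset.sum_congr rfl fun a _ => by rw [hgE _ (hlpos a)]
end

section
/- For the Simo-Taylor volumetric energy Ψ_vol(J) = (κ/4)(J² - 2 ln J - 1) with κ > 0, the minimizer of J ↦ Ψ_vol(J) + PJ over J > 0 is J* = (√(P² + κ²) - P)/κ, and d/dP of the resulting G_vol(P) equals J*, so the isothermal compressibility factor β := (dρ/dP)/ρ with ρ = ρ₀/J* equals (P² + κ²)^{-1/2}. -/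
/-- The minimizer `J*(P) = (√(P² + κ²) - P)/κ` of the Simo-Taylor functional. -/
noncomputable def Jstar (κ P : ℝ) : ℝ := (Real.sqrt (P ^ 2 + κ ^ 2) - P) / κ

/-- For the Simo-Taylor volumetric energy `Ψ_vol(J) = (κ/4)(J² - 2 ln J - 1)` with `κ > 0`,
the minimizer of `J ↦ Ψ_vol(J) + PJ` over `J > 0` is `J* = (√(P² + κ²) - P)/κ`, the
derivative of the resulting `G_vol(P)` equals `J*`, and the isothermal compressibility
factor `β = (dρ/dP)/ρ` with `ρ = ρ₀/J*` equals `(P² + κ²)^{-1/2}`. -/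
theorem simoTaylor_vol_gibbs (κ P ρ₀ : ℝ) (hκ : 0 < κ) (hρ₀ : 0 < ρ₀) :
    0 < Jstar κ P ∧
    (∀ J : ℝ, 0 < J →
      κ / 4 * ((Jstar κ P) ^ 2 - 2 * Real.log (Jstar κ P) - 1) + P * Jstar κ P
        ≤ κ / 4 * (J ^ 2 - 2 * Real.log J - 1) + P * J) ∧
    HasDerivAt
      (fun q => κ / 4 * ((Jstar κ q) ^ 2 - 2 * Real.log (Jstar κ q) - 1) + q * Jstar κ q)
      (Jstar κ P) P ∧
    (∃ d : ℝ, HasDerivAt (fun q => ρ₀ / Jstar κ q) d P ∧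
      d / (ρ₀ / Jstar κ P) = 1 / Real.sqrt (P ^ 2 + κ ^ 2)) := by
  have hs2 : (Real.sqrt (P ^ 2 + κ ^ 2)) ^ 2 = P ^ 2 + κ ^ 2 := Real.sq_sqrt (by positivity)
  set s := Real.sqrt (P ^ 2 + κ ^ 2) with hs_def
  have hs : 0 < s := Real.sqrt_pos.mpr (by positivity)
  have hPs : P < s := by nlinarith
  have hJ : 0 < Jstar κ P := div_pos (by linarith) hκ
  have hJval : Jstar κ P = (s - P) / κ := rfl
  have hJne : Jstar κ P ≠ 0 := hJ.ne'
  -- first order condition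
  have hkey : κ * (Jstar κ P) ^ 2 + 2 * P * (Jstar κ P) - κ = 0 := by
    have h0 : κ * ((s - P) / κ) ^ 2 + 2 * P * ((s - P) / κ) - κ = (s ^ 2 - P ^ 2 - κ ^ 2) / κ := by
      field_simp; ring
    rw [hJval, h0, hs2]; ring
  -- derivative of Jstar
  have h1 : HasDerivAt (fun q : ℝ => q ^ 2 + κ ^ 2) (2 * P) P := by
    simpa using (hasDerivAt_pow 2 P).add_const (κ ^ 2)
  have h2 : HasDerivAt (fun q : ℝ => Real.sqrt (q ^ 2 + κ ^ 2))
      (2 * P / (2 * s)) P := h1.sqrt (by positivity)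
  have hJd : HasDerivAt (fun q => Jstar κ q) ((P / s - 1) / κ) P := by
    have h3 := (h2.sub (hasDerivAt_id P)).div_const κ
    have hval : (2 * P / (2 * s) - 1) / κ = (P / s - 1) / κ := by
      rw [mul_div_mul_left _ _ (two_ne_zero)]
    rw [hval] at h3
    simpa [Jstar] using h3
  set d := (P / s - 1) / κ with hd_def
  refine ⟨hJ, ?_, ?_, ?_⟩
  · intro J hJpos
    set J' := Jstar κ P with hJ'def
    have h1 : Real.log J - Real.log J' ≤ J / J' - 1 := by
      have := Real.log_le_sub_one_of_pos (div_pos hJpos hJ)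
      rwa [Real.log_div hJpos.ne' hJ.ne'] at this
    have h2 : J' * (Real.log J - Real.log J') ≤ J - J' := by
      calc J' * (Real.log J - Real.log J') ≤ J' * (J / J' - 1) :=
            mul_le_mul_of_nonneg_left h1 hJ.le
        _ = J - J' := by field_simp
    rw [← mul_le_mul_iff_right₀ hJ]
    nlinarith [mul_nonneg (mul_nonneg hκ.le hJ.le) (sq_nonneg (J - J')),
      hkey, h2, sq_nonneg (J - J'), mul_pos hJ hJpos]
  · -- derivative of G
    have hsq : HasDerivAt (fun q => (Jstar κ q) ^ 2) (2 * Jstar κ P ^ 1 * d) P := hJd.pow 2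
    have hlogJ : HasDerivAt (fun q => Real.log (Jstar κ q)) (d / Jstar κ P) P :=
      hJd.log hJne
    have hmul : HasDerivAt (fun q => q * Jstar κ q) (1 * Jstar κ P + P * d) P :=
      (hasDerivAt_id P).mul hJd
    have hG := (((hsq.sub (hlogJ.const_mul 2)).sub_const 1).const_mul (κ / 4)).add hmul
    have hFOC : κ / 2 * (Jstar κ P - 1 / Jstar κ P) + P = 0 := by
      have h4 : (2 : ℝ) * Jstar κ P ≠ 0 := by positivity
      field_simp
      linear_combination hkey
    have hval : κ / 4 * (2 * Jstar κ P ^ 1 * d - 2 * (d / Jstar κ P)) + (1 * Jstar κ P + P * d)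
        = Jstar κ P := by
      linear_combination d * hFOC
    rw [hval] at hG
    exact hG
  · refine ⟨(0 * Jstar κ P - ρ₀ * d) / (Jstar κ P) ^ 2, ?_, ?_⟩
    · exact (hasDerivAt_const P ρ₀).div hJd hJne
    · rw [hJval, hd_def]
      have h1 : s - P ≠ 0 := by linarith
      field_simp
      ring
end
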